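/- Let w(x,t) = inf_{τ∈[0,t), y∈ℝⁿ} [(t−τ)·L̄((x−y)/(t−τ)) + f(y,τ)]. Then for every x ∈ ℝⁿ the map t ↦ w(x,t) is Lipschitz on [0,∞) with constant C = max{|L̄(0)|, ‖Dg‖_∞²/2 + K₀}. -/

import Mathlib

open NNReal

theorem stmt_7 (n : ℕ) (Hbar Lbar : EuclideanSpace ℝ (Fin n) → ℝ) (K₀ : ℝ) (hK₀ : 0 < K₀)
    (hHc : Continuous Hbar) (hHconv : ConvexOn ℝ Set.univ Hbar)
    (hHb : ∀ p, ‖p‖ ^ 2 / 2 - K₀ ≤ Hbar p ∧ Hbar p ≤ ‖p‖ ^ 2 / 2 + K₀)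
    (hL : ∀ v, Lbar v = ⨆ p : EuclideanSpace ℝ (Fin n), ((inner ℝ p v : ℝ) - Hbar p))
    (hLc : Continuous Lbar) (hLconv : ConvexOn ℝ Set.univ Lbar)
    (g bbar : EuclideanSpace ℝ (Fin n) → ℝ)
    (Lg : ℝ≥0) (hglip : LipschitzWith Lg g)
    (hgbd : ∃ M, ∀ x, |g x| ≤ M) (hbbd : ∃ M, ∀ x, |bbar x| ≤ M)
    (hbuc : UniformContinuous bbar)
    (hgb : ∀ x, g x ≤ bbar x)
    (f : EuclideanSpace ℝ (Fin n) → ℝ → ℝ)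
    (hf0 : ∀ y, f y 0 = g y) (hfp : ∀ y τ, 0 < τ → f y τ = bbar y)
    (w : EuclideanSpace ℝ (Fin n) → ℝ → ℝ)
    (hw0 : ∀ x, w x 0 = g x)
    (hw : ∀ x t, 0 < t → w x t =
      sInf {r | ∃ (τ : ℝ) (y : EuclideanSpace ℝ (Fin n)), 0 ≤ τ ∧ τ < t ∧
        r = (t - τ) * Lbar ((t - τ)⁻¹ • (x - y)) + f y τ})
    (C : ℝ) (hC : C = max |Lbar 0| ((Lg : ℝ) ^ 2 / 2 + K₀)) :
    ∀ (x : EuclideanSpace ℝ (Fin n)) (t₁ t₂ : ℝ), 0 ≤ t₁ → 0 ≤ t₂ →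
      |w x t₁ - w x t₂| ≤ C * |t₁ - t₂| := by
  classical
  obtain ⟨Mg, hMg⟩ := hgbd
  obtain ⟨Mb, hMb⟩ := hbbd
  have hMg0 : 0 ≤ Mg := le_trans (abs_nonneg _) (hMg 0)
  have hMb0 : 0 ≤ Mb := le_trans (abs_nonneg _) (hMb 0)
  have hbddr : ∀ v : EuclideanSpace ℝ (Fin n),
      BddAbove (Set.range fun p : EuclideanSpace ℝ (Fin n) => (inner ℝ p v : ℝ) - Hbar p) := by
    intro v
    refine ⟨‖v‖ ^ 2 / 2 + K₀, ?_⟩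
    rintro _ ⟨p, rfl⟩
    have h1 := (hHb p).1
    have h2 := real_inner_le_norm p v
    nlinarith [sq_nonneg (‖p‖ - ‖v‖)]
  have hLlb : ∀ v, ‖v‖ ^ 2 / 2 - K₀ ≤ Lbar v := by
    intro v
    rw [hL v]
    refine le_ciSup_of_le (hbddr v) v ?_
    have h1 := (hHb v).2
    have h2 : (inner ℝ v v : ℝ) = ‖v‖ ^ 2 := real_inner_self_eq_norm_sq v
    linarith
  have hC0 : 0 ≤ C := by
    rw [hC]; exact le_trans (abs_nonneg _) (le_max_left _ _)
  have hCLe : Lbar 0 ≤ C := by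
    rw [hC]; exact le_trans (le_abs_self _) (le_max_left _ _)
  have hCK : (Lg : ℝ) ^ 2 / 2 + K₀ ≤ C := by
    rw [hC]; exact le_max_right _ _
  have hfg : ∀ y τ, 0 ≤ τ → g y ≤ f y τ := by
    intro y τ hτ
    rcases hτ.eq_or_lt with h | h
    · rw [← h, hf0]
    · rw [hfp y τ h]; exact hgb y
  have hflb : ∀ y τ, 0 ≤ τ → -Mg - Mb ≤ f y τ := by
    intro y τ hτ
    rcases hτ.eq_or_lt with h | h
    · rw [← h, hf0]; have := (abs_le.mp (hMg y)).1; linarith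
    · rw [hfp y τ h]; have := (abs_le.mp (hMb y)).1; linarith
  have hne : ∀ (x : EuclideanSpace ℝ (Fin n)) (t : ℝ), 0 < t →
      Set.Nonempty {r | ∃ (τ : ℝ) (y : EuclideanSpace ℝ (Fin n)), 0 ≤ τ ∧ τ < t ∧
        r = (t - τ) * Lbar ((t - τ)⁻¹ • (x - y)) + f y τ} := by
    intro x t ht
    exact ⟨(t - 0) * Lbar ((t - 0)⁻¹ • (x - x)) + f x 0, 0, x, le_rfl, ht, rfl⟩
  have hbb : ∀ (x : EuclideanSpace ℝ (Fin n)) (t : ℝ), 0 < t →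
      BddBelow {r | ∃ (τ : ℝ) (y : EuclideanSpace ℝ (Fin n)), 0 ≤ τ ∧ τ < t ∧
        r = (t - τ) * Lbar ((t - τ)⁻¹ • (x - y)) + f y τ} := by
    intro x t ht
    refine ⟨-(t * K₀) - Mg - Mb, ?_⟩
    rintro r ⟨τ, y, hτ0, hτt, rfl⟩
    have h3 : 0 < t - τ := by linarith
    have h1 := mul_le_mul_of_nonneg_left (hLlb ((t - τ)⁻¹ • (x - y))) h3.le
    have h2 := hflb y τ hτ0
    have h4 : 0 ≤ (t - τ) * (‖(t - τ)⁻¹ • (x - y)‖ ^ 2 / 2) :=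
      mul_nonneg h3.le (by positivity)
    have h5 : 0 ≤ τ * K₀ := mul_nonneg hτ0 hK₀.le
    nlinarith
  have hwle : ∀ (x : EuclideanSpace ℝ (Fin n)) (t τ : ℝ) (y : EuclideanSpace ℝ (Fin n)),
      0 < t → 0 ≤ τ → τ < t →
      w x t ≤ (t - τ) * Lbar ((t - τ)⁻¹ • (x - y)) + f y τ := by
    intro x t τ y ht hτ0 hτt
    rw [hw x t ht]
    exact csInf_le (hbb x t ht) ⟨τ, y, hτ0, hτt, rfl⟩
  have key1 : ∀ (x : EuclideanSpace ℝ (Fin n)) (a b : ℝ), 0 ≤ a → a < b →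
      w x b ≤ w x a + C * (b - a) := by
    intro x a b ha hab
    have hb : 0 < b := lt_of_le_of_lt ha hab
    rcases ha.eq_or_lt with ha0 | ha0
    · have h := hwle x b 0 x hb le_rfl hb
      rw [sub_zero, sub_self, smul_zero, hf0] at h
      have h2 : b * Lbar 0 ≤ b * C := mul_le_mul_of_nonneg_left hCLe hb.le
      rw [← ha0, hw0]
      linarith
    · rw [hw x a ha0, ← sub_le_iff_le_add]
      refine le_csInf (hne x a ha0) ?_
      rintro r ⟨τ, y, hτ0, hτa, rfl⟩
      rcases hτ0.eq_or_lt with hτe | hτp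
      · -- τ = 0
        rw [← hτe, sub_zero, hf0]
        have h := hwle x b 0 y hb le_rfl hb
        rw [sub_zero, hf0] at h
        set v := a⁻¹ • (x - y) with hv
        have ha' : a ≠ 0 := ha0.ne'
        have hb' : b ≠ 0 := hb.ne'
        have hsm : b⁻¹ • (x - y) = (a / b) • v + (1 - a / b) • (0 : EuclideanSpace ℝ (Fin n)) := by
          rw [smul_zero, add_zero, hv, smul_smul]
          congr 1
          field_simp
        have hconv := hLconv.2 (Set.mem_univ v) (Set.mem_univ (0 : EuclideanSpace ℝ (Fin n)))
          (by positivity : (0:ℝ) ≤ a / b)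
          (by rw [sub_nonneg]; exact div_le_one_of_le₀ hab.le hb.le : (0:ℝ) ≤ 1 - a / b)
          (by ring)
        rw [← hsm] at hconv
        simp only [smul_eq_mul] at hconv
        have h2 := mul_le_mul_of_nonneg_left hconv hb.le
        have h3 : b * (a / b * Lbar v + (1 - a / b) * Lbar 0)
            = a * Lbar v + (b - a) * Lbar 0 := by field_simp
        have h4 : (b - a) * Lbar 0 ≤ (b - a) * C :=
          mul_le_mul_of_nonneg_left hCLe (by linarith)
        linarith
      · -- τ > 0
        have h := hwle x b (τ + (b - a)) y hb (by linarith) (by linarith)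
        rw [show b - (τ + (b - a)) = a - τ by ring] at h
        rw [hfp y (τ + (b - a)) (by linarith), ← hfp y τ hτp] at h
        have h2 : 0 ≤ C * (b - a) := mul_nonneg hC0 (by linarith)
        linarith
  have key2 : ∀ (x : EuclideanSpace ℝ (Fin n)) (a b : ℝ), 0 ≤ a → a < b →
      w x a ≤ w x b + C * (b - a) := by
    intro x a b ha hab
    have hb : 0 < b := lt_of_le_of_lt ha hab
    have hle : w x a - C * (b - a) ≤ w x b := by
      rw [hw x b hb]
      refine le_csInf (hne x b hb) ?_
      rintro r ⟨τ, y, hτ0, hτb, rfl⟩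
      have hs : 0 < b - τ := by linarith
      set v := (b - τ)⁻¹ • (x - y) with hv
      have hxy : x - y = (b - τ) • v := by
        rw [hv, smul_smul, mul_inv_cancel₀ hs.ne', one_smul]
      have hnv : ‖x - y‖ = (b - τ) * ‖v‖ := by
        rw [hxy, norm_smul, Real.norm_eq_abs, abs_of_pos hs]
      have hgf := hfg y τ hτ0
      have hsq : (Lg : ℝ) * ‖v‖ ≤ (Lg : ℝ) ^ 2 / 2 + ‖v‖ ^ 2 / 2 := by
        nlinarith [sq_nonneg ((Lg : ℝ) - ‖v‖)]
      have hLv := hLlb v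
      rcases lt_or_ge τ (b - a) with hcase | hcase
      · have hsa : a < b - τ := by linarith
        rcases ha.eq_or_lt with ha0 | ha0
        · -- a = 0
          rw [← ha0, hw0]
          have hlip : |g x - g y| ≤ (Lg : ℝ) * ‖x - y‖ := by
            have := hglip.dist_le_mul x y
            rwa [Real.dist_eq, dist_eq_norm] at this
          have h1 : g x ≤ g y + (Lg : ℝ) * ((b - τ) * ‖v‖) := by
            rw [← hnv]
            have := le_abs_self (g x - g y)
            linarith
          have h2 : ((Lg : ℝ) * ‖v‖) * (b - τ) ≤ ((Lg : ℝ) ^ 2 / 2 + ‖v‖ ^ 2 / 2) * (b - τ) :=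
            mul_le_mul_of_nonneg_right hsq hs.le
          have h3 : (‖v‖ ^ 2 / 2) * (b - τ) ≤ (Lbar v + K₀) * (b - τ) :=
            mul_le_mul_of_nonneg_right (by linarith) hs.le
          have h4 : ((Lg : ℝ) ^ 2 / 2 + K₀) * (b - τ) ≤ C * b :=
            mul_le_mul hCK (by linarith) hs.le hC0
          linarith
        · -- 0 < a
          set y' := x - (a / (b - τ)) • (x - y) with hy'
          have ha' : a ≠ 0 := ha0.ne'
          have hs' : b - τ ≠ 0 := hs.ne'
          have harg : a⁻¹ • (x - y') = v := by
            rw [hy', sub_sub_cancel, smul_smul, hv]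
            congr 1
            field_simp
          have h := hwle x a 0 y' ha0 le_rfl ha0
          rw [sub_zero, hf0, harg] at h
          have hyy : y' - y = (b - τ - a) • v := by
            rw [hv, smul_smul,
              show (b - τ - a) * (b - τ)⁻¹ = 1 - a / (b - τ) by field_simp, hy']
            module
          have hny : ‖y' - y‖ = (b - τ - a) * ‖v‖ := by
            rw [hyy, norm_smul, Real.norm_eq_abs, abs_of_pos (by linarith : (0:ℝ) < b - τ - a)]
          have hlip : |g y' - g y| ≤ (Lg : ℝ) * ‖y' - y‖ := by
            have := hglip.dist_le_mul y' y
            rwa [Real.dist_eq, dist_eq_norm] at this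
          have h5 : g y' ≤ g y + (Lg : ℝ) * ((b - τ - a) * ‖v‖) := by
            rw [← hny]
            have := le_abs_self (g y' - g y)
            linarith
          have h2 : ((Lg : ℝ) * ‖v‖) * (b - τ - a) ≤ ((Lg : ℝ) ^ 2 / 2 + ‖v‖ ^ 2 / 2) * (b - τ - a) :=
            mul_le_mul_of_nonneg_right hsq (by linarith)
          have h3 : (‖v‖ ^ 2 / 2) * (b - τ - a) ≤ (Lbar v + K₀) * (b - τ - a) :=
            mul_le_mul_of_nonneg_right (by linarith) (by linarith)
          have h4 : ((Lg : ℝ) ^ 2 / 2 + K₀) * (b - τ - a) ≤ C * (b - a) :=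
            mul_le_mul hCK (by linarith) (by linarith) hC0
          linarith
      · -- b - a ≤ τ
        have ha0 : 0 < a := ha.lt_of_ne (by rintro rfl; linarith)
        have h := hwle x a (τ - (b - a)) y ha0 (by linarith) (by linarith)
        rw [show a - (τ - (b - a)) = b - τ by ring] at h
        have hff : f y (τ - (b - a)) ≤ f y τ := by
          rcases (by linarith : (0:ℝ) ≤ τ - (b - a)).eq_or_lt with h0 | h0
          · rw [← h0, hf0]; exact hfg y τ hτ0
          · rw [hfp y _ h0, hfp y τ (by linarith)]
        have h2 : 0 ≤ C * (b - a) := mul_nonneg hC0 (by linarith)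
        linarith
    linarith
  intro x t₁ t₂ h1 h2
  rcases lt_trichotomy t₁ t₂ with h | h | h
  · have k1 := key1 x t₁ t₂ h1 h
    have k2 := key2 x t₁ t₂ h1 h
    rw [abs_sub_comm t₁ t₂, abs_of_nonneg (by linarith : (0:ℝ) ≤ t₂ - t₁), abs_le]
    constructor <;> linarith
  · rw [h]; simp
  · have k1 := key1 x t₂ t₁ h2 h
    have k2 := key2 x t₂ t₁ h2 h
    rw [abs_of_nonneg (by linarith : (0:ℝ) ≤ t₁ - t₂), abs_le]
    constructor <;> linarith
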